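/- Obtuse isosceles and acute isosceles classes have equal measure: μH¹({x ∈ T₊ : (x₀ = x₁ or x₁ = x₂ or x₀ = x₂) and (x₀ > π/2 or x₁ > π/2 or x₂ > π/2)}) = μH¹({x ∈ T₊ : (x₀ = x₁ or x₁ = x₂ or x₀ = x₂) and x₀ < π/2 and x₁ < π/2 and x₂ < π/2}) = (3√6/4)π; in particular each is half the measure (3√6/2)π of the full isosceles set. -/

import Mathlib

open Real MeasureTheory
open scoped ENNReal

/-- The triangle of triangles, inside Euclidean `ℝ³`. -/
def Tplus : Set (EuclideanSpace ℝ (Fin 3)) :=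
  {x | x 0 + x 1 + x 2 = π ∧
    0 ≤ x 0 ∧ x 0 ≤ π ∧ 0 ≤ x 1 ∧ x 1 ≤ π ∧ 0 ≤ x 2 ∧ x 2 ≤ π}

noncomputable def pt (a b c : ℝ) : EuclideanSpace ℝ (Fin 3) :=
  (WithLp.equiv 2 (Fin 3 → ℝ)).symm ![a, b, c]

@[simp] lemma pt_apply0 (a b c : ℝ) : pt a b c 0 = a := rfl
@[simp] lemma pt_apply1 (a b c : ℝ) : pt a b c 1 = b := rfl
@[simp] lemma pt_apply2 (a b c : ℝ) : pt a b c 2 = c := rfl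

lemma pt_ext {x y : EuclideanSpace ℝ (Fin 3)} (h0 : x 0 = y 0) (h1 : x 1 = y 1)
    (h2 : x 2 = y 2) : x = y := by
  apply PiLp.ext; intro i; fin_cases i <;> assumption

lemma mem_segment_iff (a b x : EuclideanSpace ℝ (Fin 3)) :
    x ∈ segment ℝ a b ↔ ∃ t : ℝ, 0 ≤ t ∧ t ≤ 1 ∧
      x 0 = a 0 + t * (b 0 - a 0) ∧ x 1 = a 1 + t * (b 1 - a 1) ∧
      x 2 = a 2 + t * (b 2 - a 2) := by
  rw [segment_eq_image']
  constructor
  · rintro ⟨t, ⟨ht0, ht1⟩, rfl⟩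
    exact ⟨t, ht0, ht1, rfl, rfl, rfl⟩
  · rintro ⟨t, ht0, ht1, e0, e1, e2⟩
    exact ⟨t, ⟨ht0, ht1⟩, (pt_ext e0.symm e1.symm e2.symm)⟩

lemma measurable_segment (a b : EuclideanSpace ℝ (Fin 3)) :
    MeasurableSet (segment ℝ a b) := by
  rw [segment_eq_image']
  exact ((isCompact_Icc.image
    (continuous_const.add (continuous_id.smul continuous_const))).isClosed).measurableSet

lemma edist_calc (x y : EuclideanSpace ℝ (Fin 3))
    (h : (x 0 - y 0) ^ 2 + (x 1 - y 1) ^ 2 + (x 2 - y 2) ^ 2 = 6 / 16 * π ^ 2) :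
    edist x y = ENNReal.ofReal (Real.sqrt 6 / 4 * π) := by
  rw [edist_dist, EuclideanSpace.dist_eq]
  congr 1
  have h' : ∑ i, dist (x i) (y i) ^ 2 = (Real.sqrt 6 / 4 * π) ^ 2 := by
    rw [Fin.sum_univ_three]
    simp only [Real.dist_eq, sq_abs]
    rw [h, mul_pow, div_pow, Real.sq_sqrt (by norm_num : (6:ℝ) ≥ 0)]
    ring
  rw [h', Real.sqrt_sq (by positivity)]

lemma measure_triple_union {α : Type*} [MeasurableSpace α] [MeasurableSingletonClass α]
    (μ : Measure α)
    (S1 S2 S3 : Set α) (e : α) (he : μ {e} = 0)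
    (m2 : MeasurableSet S2) (m3 : MeasurableSet S3)
    (h12 : S1 ∩ S2 ⊆ {e}) (h13 : S1 ∩ S3 ⊆ {e}) (h23 : S2 ∩ S3 ⊆ {e}) :
    μ (S1 ∪ S2 ∪ S3) = μ S1 + μ S2 + μ S3 := by
  have hms : MeasurableSet ({e} : Set α) := measurableSet_singleton e
  have key : ∀ S T : Set α, S ∩ T ⊆ {e} → Disjoint (S \ {e}) (T \ {e}) := by
    intro S T hST
    rw [Set.disjoint_iff]
    rintro x ⟨⟨hxS, hxe⟩, hxT, _⟩
    exact absurd (hST ⟨hxS, hxT⟩) hxe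
  have hd : ∀ S : Set α, μ (S \ {e}) = μ S := fun S => measure_diff_null he
  have hu : μ ((S1 \ {e}) ∪ (S2 \ {e}) ∪ (S3 \ {e})) = μ S1 + μ S2 + μ S3 := by
    rw [measure_union (Set.disjoint_union_left.mpr
        ⟨key _ _ h13, key _ _ h23⟩) (m3.diff hms),
      measure_union (key _ _ h12) (m2.diff hms), hd, hd, hd]
  refine le_antisymm ?_ ?_
  · calc μ (S1 ∪ S2 ∪ S3) ≤ μ (((S1 \ {e}) ∪ (S2 \ {e}) ∪ (S3 \ {e})) ∪ {e}) := by
          refine measure_mono fun x hx => ?_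
          by_cases hxe : x = e
          · exact Or.inr hxe
          · rcases hx with (h | h) | h
            · exact Or.inl (Or.inl (Or.inl ⟨h, hxe⟩))
            · exact Or.inl (Or.inl (Or.inr ⟨h, hxe⟩))
            · exact Or.inl (Or.inr ⟨h, hxe⟩)
      _ ≤ μ ((S1 \ {e}) ∪ (S2 \ {e}) ∪ (S3 \ {e})) + μ {e} := measure_union_le _ _
      _ = μ S1 + μ S2 + μ S3 := by rw [he, add_zero, hu]
  · rw [← hu]
    exact measure_mono (Set.union_subset_union (Set.union_subset_union
      Set.diff_subset Set.diff_subset) Set.diff_subset)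

lemma mem_S0 (x : EuclideanSpace ℝ (Fin 3)) :
    x ∈ segment ℝ (pt π 0 0) (pt (π/2) (π/4) (π/4)) \ {pt (π/2) (π/4) (π/4)} ↔
      x 1 = x 2 ∧ x 0 + x 1 + x 2 = π ∧ π/2 < x 0 ∧ x 0 ≤ π := by
  have hπ := pi_pos
  have hπ0 : π ≠ 0 := pi_ne_zero
  constructor
  · rintro ⟨hseg, hne⟩
    rw [mem_segment_iff] at hseg
    obtain ⟨t, ht0, ht1, e0, e1, e2⟩ := hseg
    simp only [pt_apply0, pt_apply1, pt_apply2] at e0 e1 e2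
    have hne' : t ≠ 1 := by
      rintro rfl
      exact hne (Set.mem_singleton_iff.mpr (pt_ext (by rw [pt_apply0]; linarith)
        (by rw [pt_apply1]; linarith) (by rw [pt_apply2]; linarith)))
    have htlt : t < 1 := lt_of_le_of_ne ht1 hne'
    refine ⟨by rw [e1, e2], by rw [e0, e1, e2]; ring, by rw [e0]; nlinarith,
      by rw [e0]; nlinarith⟩
  · rintro ⟨h12, hsum, h0, h0'⟩
    constructor
    · rw [mem_segment_iff]
      refine ⟨(2*π - 2*x 0)/π, div_nonneg (by linarith) hπ.le,
        (div_le_one hπ).mpr (by linarith), ?_, ?_, ?_⟩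
      · simp only [pt_apply0]; field_simp; ring
      · simp only [pt_apply1]
        have hx : x 1 = (π - x 0)/2 := by linarith
        rw [hx]; field_simp; ring
      · simp only [pt_apply2]
        have hx : x 2 = (π - x 0)/2 := by linarith
        rw [hx]; field_simp; ring
    · intro hmem
      rw [Set.mem_singleton_iff] at hmem
      have : x 0 = π/2 := by rw [hmem, pt_apply0]
      linarith

lemma mem_S1 (x : EuclideanSpace ℝ (Fin 3)) :
    x ∈ segment ℝ (pt 0 π 0) (pt (π/4) (π/2) (π/4)) \ {pt (π/4) (π/2) (π/4)} ↔
      x 0 = x 2 ∧ x 0 + x 1 + x 2 = π ∧ π/2 < x 1 ∧ x 1 ≤ π := by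
  have hπ := pi_pos
  have hπ0 : π ≠ 0 := pi_ne_zero
  constructor
  · rintro ⟨hseg, hne⟩
    rw [mem_segment_iff] at hseg
    obtain ⟨t, ht0, ht1, e0, e1, e2⟩ := hseg
    simp only [pt_apply0, pt_apply1, pt_apply2] at e0 e1 e2
    have hne' : t ≠ 1 := by
      rintro rfl
      exact hne (Set.mem_singleton_iff.mpr (pt_ext (by rw [pt_apply0]; linarith)
        (by rw [pt_apply1]; linarith) (by rw [pt_apply2]; linarith)))
    have htlt : t < 1 := lt_of_le_of_ne ht1 hne'
    refine ⟨by rw [e0, e2], by rw [e0, e1, e2]; ring, by rw [e1]; nlinarith,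
      by rw [e1]; nlinarith⟩
  · rintro ⟨h02, hsum, h1, h1'⟩
    constructor
    · rw [mem_segment_iff]
      refine ⟨(2*π - 2*x 1)/π, div_nonneg (by linarith) hπ.le,
        (div_le_one hπ).mpr (by linarith), ?_, ?_, ?_⟩
      · simp only [pt_apply0]
        have hx : x 0 = (π - x 1)/2 := by linarith
        rw [hx]; field_simp; ring
      · simp only [pt_apply1]; field_simp; ring
      · simp only [pt_apply2]
        have hx : x 2 = (π - x 1)/2 := by linarith
        rw [hx]; field_simp; ring
    · intro hmem
      rw [Set.mem_singleton_iff] at hmem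
      have : x 1 = π/2 := by rw [hmem, pt_apply1]
      linarith

lemma mem_S2 (x : EuclideanSpace ℝ (Fin 3)) :
    x ∈ segment ℝ (pt 0 0 π) (pt (π/4) (π/4) (π/2)) \ {pt (π/4) (π/4) (π/2)} ↔
      x 0 = x 1 ∧ x 0 + x 1 + x 2 = π ∧ π/2 < x 2 ∧ x 2 ≤ π := by
  have hπ := pi_pos
  have hπ0 : π ≠ 0 := pi_ne_zero
  constructor
  · rintro ⟨hseg, hne⟩
    rw [mem_segment_iff] at hseg
    obtain ⟨t, ht0, ht1, e0, e1, e2⟩ := hseg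
    simp only [pt_apply0, pt_apply1, pt_apply2] at e0 e1 e2
    have hne' : t ≠ 1 := by
      rintro rfl
      exact hne (Set.mem_singleton_iff.mpr (pt_ext (by rw [pt_apply0]; linarith)
        (by rw [pt_apply1]; linarith) (by rw [pt_apply2]; linarith)))
    have htlt : t < 1 := lt_of_le_of_ne ht1 hne'
    refine ⟨by rw [e0, e1], by rw [e0, e1, e2]; ring, by rw [e2]; nlinarith,
      by rw [e2]; nlinarith⟩
  · rintro ⟨h01, hsum, h2, h2'⟩
    constructor
    · rw [mem_segment_iff]
      refine ⟨(2*π - 2*x 2)/π, div_nonneg (by linarith) hπ.le,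
        (div_le_one hπ).mpr (by linarith), ?_, ?_, ?_⟩
      · simp only [pt_apply0]
        have hx : x 0 = (π - x 2)/2 := by linarith
        rw [hx]; field_simp; ring
      · simp only [pt_apply1]
        have hx : x 1 = (π - x 2)/2 := by linarith
        rw [hx]; field_simp; ring
      · simp only [pt_apply2]; field_simp; ring
    · intro hmem
      rw [Set.mem_singleton_iff] at hmem
      have : x 2 = π/2 := by rw [hmem, pt_apply2]
      linarith

lemma mem_T0 (x : EuclideanSpace ℝ (Fin 3)) :
    x ∈ segment ℝ (pt (π/2) (π/4) (π/4)) (pt 0 (π/2) (π/2)) \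
        {pt (π/2) (π/4) (π/4), pt 0 (π/2) (π/2)} ↔
      x 1 = x 2 ∧ x 0 + x 1 + x 2 = π ∧ 0 < x 0 ∧ x 0 < π/2 := by
  have hπ := pi_pos
  have hπ0 : π ≠ 0 := pi_ne_zero
  constructor
  · rintro ⟨hseg, hne⟩
    rw [mem_segment_iff] at hseg
    obtain ⟨t, ht0, ht1, e0, e1, e2⟩ := hseg
    simp only [pt_apply0, pt_apply1, pt_apply2] at e0 e1 e2
    have hne0 : t ≠ 0 := by
      rintro rfl
      exact hne (Set.mem_insert_iff.mpr (Or.inl (pt_ext (by rw [pt_apply0]; linarith)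
        (by rw [pt_apply1]; linarith) (by rw [pt_apply2]; linarith))))
    have hne1 : t ≠ 1 := by
      rintro rfl
      exact hne (Set.mem_insert_iff.mpr (Or.inr (Set.mem_singleton_iff.mpr
        (pt_ext (by rw [pt_apply0]; linarith)
          (by rw [pt_apply1]; linarith) (by rw [pt_apply2]; linarith)))))
    have ht0' : 0 < t := lt_of_le_of_ne ht0 (Ne.symm hne0)
    have ht1' : t < 1 := lt_of_le_of_ne ht1 hne1
    refine ⟨by rw [e1, e2], by rw [e0, e1, e2]; ring, by rw [e0]; nlinarith,
      by rw [e0]; nlinarith⟩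
  · rintro ⟨h12, hsum, h0, h0'⟩
    constructor
    · rw [mem_segment_iff]
      refine ⟨(π - 2*x 0)/π, div_nonneg (by linarith) hπ.le,
        (div_le_one hπ).mpr (by linarith), ?_, ?_, ?_⟩
      · simp only [pt_apply0]; field_simp; ring
      · simp only [pt_apply1]
        have hx : x 1 = (π - x 0)/2 := by linarith
        rw [hx]; field_simp; ring
      · simp only [pt_apply2]
        have hx : x 2 = (π - x 0)/2 := by linarith
        rw [hx]; field_simp; ring
    · intro hmem
      rcases Set.mem_insert_iff.mp hmem with h | h
      · have : x 0 = π/2 := by rw [h, pt_apply0]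
        linarith
      · rw [Set.mem_singleton_iff] at h
        have : x 0 = 0 := by rw [h, pt_apply0]
        linarith

lemma mem_T1 (x : EuclideanSpace ℝ (Fin 3)) :
    x ∈ segment ℝ (pt (π/4) (π/2) (π/4)) (pt (π/2) 0 (π/2)) \
        {pt (π/4) (π/2) (π/4), pt (π/2) 0 (π/2)} ↔
      x 0 = x 2 ∧ x 0 + x 1 + x 2 = π ∧ 0 < x 1 ∧ x 1 < π/2 := by
  have hπ := pi_pos
  have hπ0 : π ≠ 0 := pi_ne_zero
  constructor
  · rintro ⟨hseg, hne⟩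
    rw [mem_segment_iff] at hseg
    obtain ⟨t, ht0, ht1, e0, e1, e2⟩ := hseg
    simp only [pt_apply0, pt_apply1, pt_apply2] at e0 e1 e2
    have hne0 : t ≠ 0 := by
      rintro rfl
      exact hne (Set.mem_insert_iff.mpr (Or.inl (pt_ext (by rw [pt_apply0]; linarith)
        (by rw [pt_apply1]; linarith) (by rw [pt_apply2]; linarith))))
    have hne1 : t ≠ 1 := by
      rintro rfl
      exact hne (Set.mem_insert_iff.mpr (Or.inr (Set.mem_singleton_iff.mpr
        (pt_ext (by rw [pt_apply0]; linarith)
          (by rw [pt_apply1]; linarith) (by rw [pt_apply2]; linarith)))))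
    have ht0' : 0 < t := lt_of_le_of_ne ht0 (Ne.symm hne0)
    have ht1' : t < 1 := lt_of_le_of_ne ht1 hne1
    refine ⟨by rw [e0, e2], by rw [e0, e1, e2]; ring, by rw [e1]; nlinarith,
      by rw [e1]; nlinarith⟩
  · rintro ⟨h02, hsum, h1, h1'⟩
    constructor
    · rw [mem_segment_iff]
      refine ⟨(π - 2*x 1)/π, div_nonneg (by linarith) hπ.le,
        (div_le_one hπ).mpr (by linarith), ?_, ?_, ?_⟩
      · simp only [pt_apply0]
        have hx : x 0 = (π - x 1)/2 := by linarith
        rw [hx]; field_simp; ring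
      · simp only [pt_apply1]; field_simp; ring
      · simp only [pt_apply2]
        have hx : x 2 = (π - x 1)/2 := by linarith
        rw [hx]; field_simp; ring
    · intro hmem
      rcases Set.mem_insert_iff.mp hmem with h | h
      · have : x 1 = π/2 := by rw [h, pt_apply1]
        linarith
      · rw [Set.mem_singleton_iff] at h
        have : x 1 = 0 := by rw [h, pt_apply1]
        linarith

lemma mem_T2 (x : EuclideanSpace ℝ (Fin 3)) :
    x ∈ segment ℝ (pt (π/4) (π/4) (π/2)) (pt (π/2) (π/2) 0) \
        {pt (π/4) (π/4) (π/2), pt (π/2) (π/2) 0} ↔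
      x 0 = x 1 ∧ x 0 + x 1 + x 2 = π ∧ 0 < x 2 ∧ x 2 < π/2 := by
  have hπ := pi_pos
  have hπ0 : π ≠ 0 := pi_ne_zero
  constructor
  · rintro ⟨hseg, hne⟩
    rw [mem_segment_iff] at hseg
    obtain ⟨t, ht0, ht1, e0, e1, e2⟩ := hseg
    simp only [pt_apply0, pt_apply1, pt_apply2] at e0 e1 e2
    have hne0 : t ≠ 0 := by
      rintro rfl
      exact hne (Set.mem_insert_iff.mpr (Or.inl (pt_ext (by rw [pt_apply0]; linarith)
        (by rw [pt_apply1]; linarith) (by rw [pt_apply2]; linarith))))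
    have hne1 : t ≠ 1 := by
      rintro rfl
      exact hne (Set.mem_insert_iff.mpr (Or.inr (Set.mem_singleton_iff.mpr
        (pt_ext (by rw [pt_apply0]; linarith)
          (by rw [pt_apply1]; linarith) (by rw [pt_apply2]; linarith)))))
    have ht0' : 0 < t := lt_of_le_of_ne ht0 (Ne.symm hne0)
    have ht1' : t < 1 := lt_of_le_of_ne ht1 hne1
    refine ⟨by rw [e0, e1], by rw [e0, e1, e2]; ring, by rw [e2]; nlinarith,
      by rw [e2]; nlinarith⟩
  · rintro ⟨h01, hsum, h2, h2'⟩
    constructor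
    · rw [mem_segment_iff]
      refine ⟨(π - 2*x 2)/π, div_nonneg (by linarith) hπ.le,
        (div_le_one hπ).mpr (by linarith), ?_, ?_, ?_⟩
      · simp only [pt_apply0]
        have hx : x 0 = (π - x 2)/2 := by linarith
        rw [hx]; field_simp; ring
      · simp only [pt_apply1]
        have hx : x 1 = (π - x 2)/2 := by linarith
        rw [hx]; field_simp; ring
      · simp only [pt_apply2]; field_simp; ring
    · intro hmem
      rcases Set.mem_insert_iff.mp hmem with h | h
      · have : x 2 = π/2 := by rw [h, pt_apply2]
        linarith
      · rw [Set.mem_singleton_iff] at h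
        have : x 2 = 0 := by rw [h, pt_apply2]
        linarith

theorem measures_of_obtuse_isosceles_and_acute_isosceles :
    μH[1] {x ∈ Tplus | (x 0 = x 1 ∨ x 1 = x 2 ∨ x 0 = x 2) ∧
        (x 0 > π / 2 ∨ x 1 > π / 2 ∨ x 2 > π / 2)} =
      ENNReal.ofReal (3 * Real.sqrt 6 / 4 * π) ∧
    μH[1] {x ∈ Tplus | (x 0 = x 1 ∨ x 1 = x 2 ∨ x 0 = x 2) ∧
        x 0 < π / 2 ∧ x 1 < π / 2 ∧ x 2 < π / 2} =
      ENNReal.ofReal (3 * Real.sqrt 6 / 4 * π) ∧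
    (2 : ℝ≥0∞) * ENNReal.ofReal (3 * Real.sqrt 6 / 4 * π) =
      ENNReal.ofReal (3 * Real.sqrt 6 / 2 * π) := by
  have hπ := pi_pos
  have hs6 : (0:ℝ) ≤ Real.sqrt 6 := Real.sqrt_nonneg 6
  haveI : NoAtoms (μH[1] : Measure (EuclideanSpace ℝ (Fin 3))) := MeasureTheory.Measure.noAtoms_hausdorff (EuclideanSpace ℝ (Fin 3)) one_pos
  set e : EuclideanSpace ℝ (Fin 3) := pt (π/3) (π/3) (π/3) with he_def
  set L : ℝ≥0∞ := ENNReal.ofReal (Real.sqrt 6 / 4 * π) with hL_def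
  -- measures of the six half-open segments
  have hseg : ∀ a b : EuclideanSpace ℝ (Fin 3), ∀ s : Set (EuclideanSpace ℝ (Fin 3)),
      μH[1] s = 0 → (a 0 - b 0)^2 + (a 1 - b 1)^2 + (a 2 - b 2)^2 = 6/16*π^2 →
      μH[1] (segment ℝ a b \ s) = L := by
    intro a b s hs hab
    rw [measure_diff_null hs, hausdorffMeasure_segment, edist_calc a b hab]
  have hsing : ∀ y : EuclideanSpace ℝ (Fin 3), μH[1] ({y} : Set _) = 0 :=
    fun y => (MeasureTheory.Measure.noAtoms_hausdorff (EuclideanSpace ℝ (Fin 3)) one_pos).measure_singleton y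
  have hpair : ∀ y z : EuclideanSpace ℝ (Fin 3), μH[1] ({y, z} : Set _) = 0 := by
    intro y z
    rw [Set.insert_eq]
    exact measure_union_null (hsing y) (hsing z)
  -- the three obtuse half-open segments
  have hS0 : μH[1] (segment ℝ (pt π 0 0) (pt (π/2) (π/4) (π/4)) \ {pt (π/2) (π/4) (π/4)}) = L :=
    hseg _ _ _ (hsing _) (by simp only [pt_apply0, pt_apply1, pt_apply2]; ring)
  have hS1 : μH[1] (segment ℝ (pt 0 π 0) (pt (π/4) (π/2) (π/4)) \ {pt (π/4) (π/2) (π/4)}) = L :=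
    hseg _ _ _ (hsing _) (by simp only [pt_apply0, pt_apply1, pt_apply2]; ring)
  have hS2 : μH[1] (segment ℝ (pt 0 0 π) (pt (π/4) (π/4) (π/2)) \ {pt (π/4) (π/4) (π/2)}) = L :=
    hseg _ _ _ (hsing _) (by simp only [pt_apply0, pt_apply1, pt_apply2]; ring)
  have hT0 : μH[1] (segment ℝ (pt (π/2) (π/4) (π/4)) (pt 0 (π/2) (π/2)) \
      {pt (π/2) (π/4) (π/4), pt 0 (π/2) (π/2)}) = L :=
    hseg _ _ _ (hpair _ _) (by simp only [pt_apply0, pt_apply1, pt_apply2]; ring)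
  have hT1 : μH[1] (segment ℝ (pt (π/4) (π/2) (π/4)) (pt (π/2) 0 (π/2)) \
      {pt (π/4) (π/2) (π/4), pt (π/2) 0 (π/2)}) = L :=
    hseg _ _ _ (hpair _ _) (by simp only [pt_apply0, pt_apply1, pt_apply2]; ring)
  have hT2 : μH[1] (segment ℝ (pt (π/4) (π/4) (π/2)) (pt (π/2) (π/2) 0) \
      {pt (π/4) (π/4) (π/2), pt (π/2) (π/2) 0}) = L :=
    hseg _ _ _ (hpair _ _) (by simp only [pt_apply0, pt_apply1, pt_apply2]; ring)
  have h3L : L + L + L = ENNReal.ofReal (3 * Real.sqrt 6 / 4 * π) := by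
    rw [hL_def, ← ENNReal.ofReal_add (by positivity) (by positivity),
      ← ENNReal.ofReal_add (by positivity) (by positivity)]
    congr 1; ring
  refine ⟨?_, ?_, ?_⟩
  · -- obtuse isosceles
    have hset : {x ∈ Tplus | (x 0 = x 1 ∨ x 1 = x 2 ∨ x 0 = x 2) ∧
        (x 0 > π / 2 ∨ x 1 > π / 2 ∨ x 2 > π / 2)} =
        (segment ℝ (pt π 0 0) (pt (π/2) (π/4) (π/4)) \ {pt (π/2) (π/4) (π/4)}) ∪
        (segment ℝ (pt 0 π 0) (pt (π/4) (π/2) (π/4)) \ {pt (π/4) (π/2) (π/4)}) ∪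
        (segment ℝ (pt 0 0 π) (pt (π/4) (π/4) (π/2)) \ {pt (π/4) (π/4) (π/2)}) := by
      ext x
      rw [Set.mem_union, Set.mem_union, mem_S0, mem_S1, mem_S2]
      simp only [Set.mem_setOf_eq, Tplus]
      constructor
      · rintro ⟨⟨hsum, h0l, h0u, h1l, h1u, h2l, h2u⟩, heq, hob⟩
        rcases heq with h | h | h <;> rcases hob with o | o | o
        · exfalso; linarith
        · exfalso; linarith
        · exact Or.inr ⟨h, hsum, o, h2u⟩
        · exact Or.inl (Or.inl ⟨h, hsum, o, h0u⟩)
        · exfalso; linarith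
        · exfalso; linarith
        · exfalso; linarith
        · exact Or.inl (Or.inr ⟨h, hsum, o, h1u⟩)
        · exfalso; linarith
      · rintro ((⟨h, hsum, ho, hu⟩ | ⟨h, hsum, ho, hu⟩) | ⟨h, hsum, ho, hu⟩)
        · exact ⟨⟨hsum, by linarith, hu, by linarith, by linarith, by linarith, by linarith⟩,
            Or.inr (Or.inl h), Or.inl ho⟩
        · exact ⟨⟨hsum, by linarith, by linarith, by linarith, hu, by linarith, by linarith⟩,
            Or.inr (Or.inr h), Or.inr (Or.inl ho)⟩
        · exact ⟨⟨hsum, by linarith, by linarith, by linarith, by linarith, by linarith, hu⟩,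
            Or.inl h, Or.inr (Or.inr ho)⟩
    rw [hset, measure_triple_union _ _ _ _ e (hsing e)
      ((measurable_segment _ _).diff (measurableSet_singleton _))
      ((measurable_segment _ _).diff (measurableSet_singleton _))
      ?_ ?_ ?_, hS0, hS1, hS2, h3L]
    · rintro x ⟨hA, hB⟩
      rw [mem_S0] at hA; rw [mem_S1] at hB
      exfalso
      obtain ⟨ha, hs, h0, -⟩ := hA
      obtain ⟨hb, -, h1, -⟩ := hB
      linarith
    · rintro x ⟨hA, hB⟩
      rw [mem_S0] at hA; rw [mem_S2] at hB
      exfalso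
      obtain ⟨ha, hs, h0, -⟩ := hA
      obtain ⟨hb, -, h2, -⟩ := hB
      linarith
    · rintro x ⟨hA, hB⟩
      rw [mem_S1] at hA; rw [mem_S2] at hB
      exfalso
      obtain ⟨ha, hs, h1, -⟩ := hA
      obtain ⟨hb, -, h2, -⟩ := hB
      linarith
  · -- acute isosceles
    have hset : {x ∈ Tplus | (x 0 = x 1 ∨ x 1 = x 2 ∨ x 0 = x 2) ∧
        x 0 < π / 2 ∧ x 1 < π / 2 ∧ x 2 < π / 2} =
        (segment ℝ (pt (π/2) (π/4) (π/4)) (pt 0 (π/2) (π/2)) \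
          {pt (π/2) (π/4) (π/4), pt 0 (π/2) (π/2)}) ∪
        (segment ℝ (pt (π/4) (π/2) (π/4)) (pt (π/2) 0 (π/2)) \
          {pt (π/4) (π/2) (π/4), pt (π/2) 0 (π/2)}) ∪
        (segment ℝ (pt (π/4) (π/4) (π/2)) (pt (π/2) (π/2) 0) \
          {pt (π/4) (π/4) (π/2), pt (π/2) (π/2) 0}) := by
      ext x
      rw [Set.mem_union, Set.mem_union, mem_T0, mem_T1, mem_T2]
      simp only [Set.mem_setOf_eq, Tplus]
      constructor
      · rintro ⟨⟨hsum, h0l, h0u, h1l, h1u, h2l, h2u⟩, heq, a0, a1, a2⟩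
        rcases heq with h | h | h
        · exact Or.inr ⟨h, hsum, by linarith, a2⟩
        · exact Or.inl (Or.inl ⟨h, hsum, by linarith, a0⟩)
        · exact Or.inl (Or.inr ⟨h, hsum, by linarith, a1⟩)
      · rintro ((⟨h, hsum, ho, hu⟩ | ⟨h, hsum, ho, hu⟩) | ⟨h, hsum, ho, hu⟩)
        · exact ⟨⟨hsum, by linarith, by linarith, by linarith, by linarith, by linarith,
            by linarith⟩, Or.inr (Or.inl h), hu, by linarith, by linarith⟩
        · exact ⟨⟨hsum, by linarith, by linarith, by linarith, by linarith, by linarith,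
            by linarith⟩, Or.inr (Or.inr h), by linarith, hu, by linarith⟩
        · exact ⟨⟨hsum, by linarith, by linarith, by linarith, by linarith, by linarith,
            by linarith⟩, Or.inl h, by linarith, by linarith, hu⟩
    rw [hset, measure_triple_union _ _ _ _ e (hsing e)
      ((measurable_segment _ _).diff ((measurableSet_singleton _).insert _))
      ((measurable_segment _ _).diff ((measurableSet_singleton _).insert _))
      ?_ ?_ ?_, hT0, hT1, hT2, h3L]
    · rintro x ⟨hA, hB⟩
      rw [mem_T0] at hA; rw [mem_T1] at hB
      obtain ⟨ha, hs, -, -⟩ := hA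
      obtain ⟨hb, -, -, -⟩ := hB
      rw [Set.mem_singleton_iff, he_def]
      exact pt_ext (by rw [pt_apply0]; linarith) (by rw [pt_apply1]; linarith)
        (by rw [pt_apply2]; linarith)
    · rintro x ⟨hA, hB⟩
      rw [mem_T0] at hA; rw [mem_T2] at hB
      obtain ⟨ha, hs, -, -⟩ := hA
      obtain ⟨hb, -, -, -⟩ := hB
      rw [Set.mem_singleton_iff, he_def]
      exact pt_ext (by rw [pt_apply0]; linarith) (by rw [pt_apply1]; linarith)
        (by rw [pt_apply2]; linarith)
    · rintro x ⟨hA, hB⟩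
      rw [mem_T1] at hA; rw [mem_T2] at hB
      obtain ⟨ha, hs, -, -⟩ := hA
      obtain ⟨hb, -, -, -⟩ := hB
      rw [Set.mem_singleton_iff, he_def]
      exact pt_ext (by rw [pt_apply0]; linarith) (by rw [pt_apply1]; linarith)
        (by rw [pt_apply2]; linarith)
  · rw [two_mul, ← ENNReal.ofReal_add (by positivity) (by positivity)]
    congr 1; ring
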